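/- arXiv:2201.09143 — 3 statements merged into one kernel-verified Lean document; each statement's English description precedes it below -/
import Mathlib

section
/- (Schur orthogonality, inequivalent case) Let (H₁, ρ₁) and (H₂, ρ₂) be finite-dimensional irreducible unitary representations of a compact topological group G that are not equivalent (i.e. there is no bijective intertwining operator between them), and let dg denote the normalized Haar measure on G. Then for all x₁, y₁ ∈ H₁ and x₂, y₂ ∈ H₂, the matrix coefficients are orthogonal in L²(G): ∫_G conj(⟨x₁, ρ₁(g)y₁⟩) · ⟨x₂, ρ₂(g)y₂⟩ dg = 0. -/
open scoped InnerProductSpace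
open MeasureTheory

/-- Schur orthogonality, inequivalent case: the matrix coefficients of two inequivalent
finite-dimensional irreducible unitary representations of a compact group are orthogonal
with respect to the normalized Haar measure. -/
theorem stmt3 {G : Type*} [Group G] [TopologicalSpace G] [IsTopologicalGroup G] [CompactSpace G]
    [MeasurableSpace G] [BorelSpace G]
    (μ : Measure G) [IsProbabilityMeasure μ] [μ.IsMulLeftInvariant] [μ.IsMulRightInvariant]
    [μ.Regular]
    {H₁ H₂ : Type*} [NormedAddCommGroup H₁] [InnerProductSpace ℂ H₁] [FiniteDimensional ℂ H₁]
    [NormedAddCommGroup H₂] [InnerProductSpace ℂ H₂] [FiniteDimensional ℂ H₂]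
    (ρ₁ : G →* (H₁ ≃ₗ[ℂ] H₁)) (ρ₂ : G →* (H₂ ≃ₗ[ℂ] H₂))
    (h₁cont : ∀ x : H₁, Continuous fun g => ρ₁ g x)
    (h₂cont : ∀ x : H₂, Continuous fun g => ρ₂ g x)
    (h₁unitary : ∀ (g : G) (x y : H₁), ⟪ρ₁ g x, ρ₁ g y⟫_ℂ = ⟪x, y⟫_ℂ)
    (h₂unitary : ∀ (g : G) (x y : H₂), ⟪ρ₂ g x, ρ₂ g y⟫_ℂ = ⟪x, y⟫_ℂ)
    (h₁irr : Nontrivial H₁ ∧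
      ∀ W : Submodule ℂ H₁, (∀ (g : G), ∀ x ∈ W, ρ₁ g x ∈ W) → W = ⊥ ∨ W = ⊤)
    (h₂irr : Nontrivial H₂ ∧
      ∀ W : Submodule ℂ H₂, (∀ (g : G), ∀ x ∈ W, ρ₂ g x ∈ W) → W = ⊥ ∨ W = ⊤)
    (hinequiv : ¬ ∃ T : H₁ →L[ℂ] H₂,
      (∀ (g : G) (x : H₁), T (ρ₁ g x) = ρ₂ g (T x)) ∧ Function.Bijective T)
    (x₁ y₁ : H₁) (x₂ y₂ : H₂) :
    ∫ g, (starRingEnd ℂ) ⟪x₁, ρ₁ g y₁⟫_ℂ * ⟪x₂, ρ₂ g y₂⟫_ℂ ∂μ = 0 := by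
  classical
  have mulapp₁ : ∀ (a b : G) (x : H₁), ρ₁ (a * b) x = ρ₁ a (ρ₁ b x) := by
    intro a b x; rw [map_mul]; rfl
  have mulapp₂ : ∀ (a b : G) (x : H₂), ρ₂ (a * b) x = ρ₂ a (ρ₂ b x) := by
    intro a b x; rw [map_mul]; rfl
  -- the integrand of the averaged (rank-one smeared) operator
  set F : H₁ → G → H₂ := fun v g => ⟪y₁, ρ₁ g⁻¹ v⟫_ℂ • ρ₂ g y₂ with hF
  have hFcont : ∀ v, Continuous (F v) := by
    intro v
    apply Continuous.smul
    · exact Continuous.inner continuous_const ((h₁cont v).comp continuous_inv)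
    · exact h₂cont y₂
  have hFint : ∀ v, Integrable (F v) μ := fun v =>
    (hFcont v).integrable_of_hasCompactSupport (HasCompactSupport.of_compactSpace _)
  have hFadd : ∀ u v g, F (u + v) g = F u g + F v g := by
    intro u v g; simp [hF, inner_add_right, add_smul]
  have hFsmul : ∀ (c : ℂ) v g, F (c • v) g = c • F v g := by
    intro c v g; simp [hF, inner_smul_right, smul_smul]
  -- the averaged operator
  set T : H₁ →ₗ[ℂ] H₂ :=
    { toFun := fun v => ∫ g, F v g ∂μ
      map_add' := by
        intro u v
        simp only [hFadd]
        exact integral_add (hFint u) (hFint v)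
      map_smul' := by
        intro c v
        simp only [hFsmul, RingHom.id_apply]
        exact integral_smul c _ } with hTdef
  have hTapp : ∀ v, T v = ∫ g, F v g ∂μ := fun v => rfl
  -- T intertwines the two representations
  have hT : ∀ (h : G) (v : H₁), T (ρ₁ h v) = ρ₂ h (T v) := by
    intro h v
    have key : ∀ g : G, F (ρ₁ h v) (h * g) = ρ₂ h (F v g) := by
      intro g
      have e1 : ρ₁ (h * g)⁻¹ (ρ₁ h v) = ρ₁ g⁻¹ v := by
        rw [← mulapp₁]
        congr 1
        group
      have e2 : ρ₂ (h * g) y₂ = ρ₂ h (ρ₂ g y₂) := mulapp₂ h g y₂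
      show ⟪y₁, ρ₁ (h * g)⁻¹ (ρ₁ h v)⟫_ℂ • ρ₂ (h * g) y₂
          = ρ₂ h (⟪y₁, ρ₁ g⁻¹ v⟫_ℂ • ρ₂ g y₂)
      rw [e1, e2, _root_.map_smul]
    calc T (ρ₁ h v) = ∫ g, F (ρ₁ h v) g ∂μ := rfl
      _ = ∫ g, F (ρ₁ h v) (h * g) ∂μ := (integral_mul_left_eq_self _ h).symm
      _ = ∫ g, ((ρ₂ h).toLinearMap.toContinuousLinearMap) (F v g) ∂μ := by
          simp only [key]; rfl
      _ = ρ₂ h (T v) := by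
          rw [ContinuousLinearMap.integral_comp_comm _ (hFint v)]
          rfl
  -- Schur's lemma: T must vanish
  have hT0 : T = 0 := by
    by_contra hne
    have hkerinv : ∀ (g : G), ∀ x ∈ LinearMap.ker T, ρ₁ g x ∈ LinearMap.ker T := by
      intro g x hx
      simp only [LinearMap.mem_ker] at hx ⊢
      rw [hT g x, hx, map_zero]
    have hrangeinv : ∀ (g : G), ∀ x ∈ LinearMap.range T, ρ₂ g x ∈ LinearMap.range T := by
      rintro g x ⟨v, rfl⟩
      exact ⟨ρ₁ g v, hT g v⟩
    have hker : LinearMap.ker T = ⊥ := by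
      rcases h₁irr.2 (LinearMap.ker T) hkerinv with hbot | htop
      · exact hbot
      · exact absurd (LinearMap.ker_eq_top.mp htop) hne
    have hrange : LinearMap.range T = ⊤ := by
      rcases h₂irr.2 (LinearMap.range T) hrangeinv with hbot | htop
      · exact absurd (LinearMap.range_eq_bot.mp hbot) hne
      · exact htop
    exact hinequiv ⟨T.toContinuousLinearMap, fun g x => hT g x,
      LinearMap.ker_eq_bot.mp hker, LinearMap.range_eq_top.mp hrange⟩
  -- rewrite the integrand as an inner product against F x₁
  have hpt : ∀ g : G, (starRingEnd ℂ) ⟪x₁, ρ₁ g y₁⟫_ℂ * ⟪x₂, ρ₂ g y₂⟫_ℂ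
      = ⟪x₂, F x₁ g⟫_ℂ := by
    intro g
    have e0 : ρ₁ g⁻¹ (ρ₁ g y₁) = y₁ := by
      rw [← mulapp₁, inv_mul_cancel, map_one]
      rfl
    have e1 : (starRingEnd ℂ) ⟪x₁, ρ₁ g y₁⟫_ℂ = ⟪y₁, ρ₁ g⁻¹ x₁⟫_ℂ := by
      rw [inner_conj_symm, ← h₁unitary g⁻¹ (ρ₁ g y₁) x₁, e0]
    rw [e1, hF]
    simp [inner_smul_right]
  calc ∫ g, (starRingEnd ℂ) ⟪x₁, ρ₁ g y₁⟫_ℂ * ⟪x₂, ρ₂ g y₂⟫_ℂ ∂μ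
      = ∫ g, ⟪x₂, F x₁ g⟫_ℂ ∂μ := by
        congr 1; funext g; exact hpt g
    _ = ⟪x₂, T x₁⟫_ℂ := by
        rw [hTapp, ← integral_inner (𝕜 := ℂ) (hFint x₁) x₂]
    _ = 0 := by rw [hT0]; simp
end

section
/- (Schur orthogonality, equivalent case) Let (H, ρ) be a finite-dimensional irreducible unitary representation of a compact topological group G of dimension n, and let dg denote the normalized Haar measure on G. Then for all x₁, y₁, x₂, y₂ ∈ H, ∫_G conj(⟨x₁, ρ(g)y₁⟩) · ⟨x₂, ρ(g)y₂⟩ dg = (1/n) ⟨x₂, x₁⟩ ⟨y₁, y₂⟩. In particular, for an orthonormal basis (e_i) the matrix coefficients ρ_{ij}(g) = ⟨e_i, ρ(g)e_j⟩ satisfy ∫_G conj(ρ_{ij}(g)) ρ_{kl}(g) dg = (1/n) δ_{ik} δ_{jl}. -/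
open scoped InnerProductSpace
open MeasureTheory

/-- Schur orthogonality, equivalent case: for a finite-dimensional irreducible unitary
representation (H, ρ) of a compact group G of dimension n,
∫ conj⟪x₁, ρ(g)y₁⟫ ⟪x₂, ρ(g)y₂⟫ dg = (1/n) ⟪x₂, x₁⟫ ⟪y₁, y₂⟫, and in particular for an
orthonormal basis the matrix coefficients satisfy
∫ conj(ρᵢⱼ) ρₖₗ dg = (1/n) δᵢₖ δⱼₗ. -/
theorem stmt4 {G : Type*} [Group G] [TopologicalSpace G] [IsTopologicalGroup G] [CompactSpace G]
    [MeasurableSpace G] [BorelSpace G]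
    (μ : Measure G) [IsProbabilityMeasure μ] [μ.IsMulLeftInvariant] [μ.IsMulRightInvariant]
    [μ.Regular]
    {H : Type*} [NormedAddCommGroup H] [InnerProductSpace ℂ H] [FiniteDimensional ℂ H]
    (n : ℕ) (hn : Module.finrank ℂ H = n)
    (ρ : G →* (H ≃ₗ[ℂ] H))
    (hcont : ∀ x : H, Continuous fun g => ρ g x)
    (hunitary : ∀ (g : G) (x y : H), ⟪ρ g x, ρ g y⟫_ℂ = ⟪x, y⟫_ℂ)
    (hirr : Nontrivial H ∧
      ∀ W : Submodule ℂ H, (∀ (g : G), ∀ x ∈ W, ρ g x ∈ W) → W = ⊥ ∨ W = ⊤) :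
    (∀ x₁ y₁ x₂ y₂ : H,
      ∫ g, (starRingEnd ℂ) ⟪x₁, ρ g y₁⟫_ℂ * ⟪x₂, ρ g y₂⟫_ℂ ∂μ
        = (1 / (n : ℂ)) * (⟪x₂, x₁⟫_ℂ * ⟪y₁, y₂⟫_ℂ)) ∧
    (∀ (e : OrthonormalBasis (Fin n) ℂ H) (i j k l : Fin n),
      ∫ g, (starRingEnd ℂ) ⟪e i, ρ g (e j)⟫_ℂ * ⟪e k, ρ g (e l)⟫_ℂ ∂μ
        = (1 / (n : ℂ)) * (if i = k then 1 else 0) * (if j = l then 1 else 0)) := by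
  obtain ⟨hnt, hirr'⟩ := hirr
  have hnpos : 0 < n := hn ▸ Module.finrank_pos
  have hn0 : (n : ℂ) ≠ 0 := Nat.cast_ne_zero.mpr hnpos.ne'
  have key : ∀ x₁ y₁ x₂ y₂ : H,
      ∫ g, (starRingEnd ℂ) ⟪x₁, ρ g y₁⟫_ℂ * ⟪x₂, ρ g y₂⟫_ℂ ∂μ
        = (1 / (n : ℂ)) * (⟪x₂, x₁⟫_ℂ * ⟪y₁, y₂⟫_ℂ) := by
    intro x₁ y₁ x₂ y₂
    -- integrability
    have hint : ∀ z : H, Integrable (fun g => ⟪ρ g y₁, z⟫_ℂ • ρ g y₂) μ := fun z =>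
      (((hcont y₁).inner continuous_const).smul (hcont y₂)).integrable_of_hasCompactSupport
        (HasCompactSupport.of_compactSpace _)
    -- the averaged operator
    set T : Module.End ℂ H :=
      { toFun := fun z => ∫ g, ⟪ρ g y₁, z⟫_ℂ • ρ g y₂ ∂μ
        map_add' := by
          intro a b
          simp only [inner_add_right, add_smul]
          exact integral_add (hint a) (hint b)
        map_smul' := by
          intro c a
          simp only [inner_smul_right, RingHom.id_apply, mul_smul]
          exact integral_smul c _ } with hT
    have hTapp : ∀ z : H, T z = ∫ g, ⟪ρ g y₁, z⟫_ℂ • ρ g y₂ ∂μ := fun z => rfl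
    -- equivariance
    have hcomm : ∀ (h : G) (z : H), T (ρ h z) = ρ h (T z) := by
      intro h z
      have hmul : ∀ a b : G, ∀ v : H, ρ (a * b) v = ρ a (ρ b v) := by
        intro a b v
        rw [map_mul]
        rfl
      have h1 : ∀ g : G, ⟪ρ g y₁, ρ h z⟫_ℂ = ⟪ρ (h⁻¹ * g) y₁, z⟫_ℂ := by
        intro g
        have := hunitary h (ρ (h⁻¹ * g) y₁) z
        rwa [← hmul, mul_inv_cancel_left] at this
      rw [hTapp]
      simp_rw [h1]
      have h2 : (∫ g, ⟪ρ (h⁻¹ * g) y₁, z⟫_ℂ • ρ g y₂ ∂μ)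
          = ∫ g, ⟪ρ g y₁, z⟫_ℂ • ρ (h * g) y₂ ∂μ := by
        have := integral_mul_left_eq_self (μ := μ)
          (fun g' => ⟪ρ g' y₁, z⟫_ℂ • ρ (h * g') y₂) h⁻¹
        simp only [mul_inv_cancel_left] at this
        exact this
      rw [h2]
      have h3 : ∀ g : G, ⟪ρ g y₁, z⟫_ℂ • ρ (h * g) y₂ = ρ h (⟪ρ g y₁, z⟫_ℂ • ρ g y₂) := by
        intro g
        rw [hmul, LinearEquiv.map_smul]
      simp_rw [h3]
      let L : H →L[ℂ] H := LinearMap.toContinuousLinearMap ((ρ h : H ≃ₗ[ℂ] H) : H →ₗ[ℂ] H)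
      have : (∫ g, L (⟪ρ g y₁, z⟫_ℂ • ρ g y₂) ∂μ) = L (∫ g, ⟪ρ g y₁, z⟫_ℂ • ρ g y₂ ∂μ) :=
        L.integral_comp_comm (hint z)
      exact this
    -- Schur's lemma: T is scalar
    obtain ⟨c, hc⟩ := Module.End.exists_eigenvalue T
    have hW : ∀ (g : G), ∀ x ∈ Module.End.eigenspace T c, ρ g x ∈ Module.End.eigenspace T c := by
      intro g x hx
      rw [Module.End.mem_eigenspace_iff] at hx ⊢
      rw [hcomm, hx, LinearEquiv.map_smul]
    rcases hirr' _ hW with hbot | htop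
    · exact absurd hbot hc
    have hTsc : ∀ z : H, T z = c • z := by
      intro z
      have : z ∈ Module.End.eigenspace T c := htop ▸ Submodule.mem_top
      rwa [Module.End.mem_eigenspace_iff] at this
    -- compute c via trace over an orthonormal basis
    have b : OrthonormalBasis (Fin n) ℂ H :=
      (stdOrthonormalBasis ℂ H).reindex (finCongr hn)
    have hsum : (n : ℂ) * c = ⟪y₁, y₂⟫_ℂ := by
      have h1 : ∀ i : Fin n, ⟪b i, T (b i)⟫_ℂ = c := by
        intro i
        rw [hTsc, inner_smul_right, orthonormal_iff_ite.mp b.orthonormal]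
        simp
      have h2 : ∀ i : Fin n, ⟪b i, T (b i)⟫_ℂ
          = ∫ g, ⟪ρ g y₁, b i⟫_ℂ * ⟪b i, ρ g y₂⟫_ℂ ∂μ := by
        intro i
        rw [hTapp, ← integral_inner (hint (b i))]
        simp_rw [inner_smul_right]
      have h3 : ∑ i : Fin n, ⟪b i, T (b i)⟫_ℂ = ⟪y₁, y₂⟫_ℂ := by
        simp_rw [h2]
        rw [← integral_finset_sum]
        · have : ∀ g : G, ∑ i : Fin n, ⟪ρ g y₁, b i⟫_ℂ * ⟪b i, ρ g y₂⟫_ℂ = ⟪y₁, y₂⟫_ℂ := by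
            intro g
            rw [b.sum_inner_mul_inner, hunitary]
          simp_rw [this]
          simp
        · intro i _
          exact (((hcont y₁).inner continuous_const).mul
            (continuous_const.inner (hcont y₂))).integrable_of_hasCompactSupport
            (HasCompactSupport.of_compactSpace _)
      calc (n : ℂ) * c = ∑ i : Fin n, ⟪b i, T (b i)⟫_ℂ := by simp [h1, mul_comm]
        _ = ⟪y₁, y₂⟫_ℂ := h3
    have hc' : c = ⟪y₁, y₂⟫_ℂ / n := by field_simp [mul_comm] at hsum ⊢; linear_combination hsum
    -- conclude
    have hfinal : (∫ g, (starRingEnd ℂ) ⟪x₁, ρ g y₁⟫_ℂ * ⟪x₂, ρ g y₂⟫_ℂ ∂μ)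
        = ⟪x₂, T x₁⟫_ℂ := by
      rw [hTapp, ← integral_inner (hint x₁)]
      congr 1
      ext g
      rw [inner_smul_right, inner_conj_symm]
    rw [hfinal, hTsc, inner_smul_right, hc']
    ring
  refine ⟨key, fun e i j k l => ?_⟩
  rw [key]
  have he := orthonormal_iff_ite.mp e.orthonormal
  rw [he, he]
  by_cases hik : i = k <;> by_cases hjl : j = l <;> simp [hik, hjl, eq_comm]
end

section
/- For each n ∈ ℕ, the action of SU(2) on the space H^n of homogeneous complex polynomials of degree n in two variables, given by (ρ(g) f)(z) = f(g⁻¹ z) for g ∈ SU(2) and z ∈ ℂ², is a representation of SU(2), and this representation is irreducible: H^n ≠ {0} and the only subspaces W ⊆ H^n with ρ(g)W ⊆ W for all g ∈ SU(2) are {0} and H^n. -/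
open MvPolynomial
noncomputable section
namespace Stmt9

def sub (A : Matrix (Fin 2) (Fin 2) ℂ) : Fin 2 → MvPolynomial (Fin 2) ℂ :=
  fun i => ∑ j, C (A i j) * X j

def act (A : Matrix (Fin 2) (Fin 2) ℂ) (f : MvPolynomial (Fin 2) ℂ) : MvPolynomial (Fin 2) ℂ :=
  aeval (sub A) f

lemma act_one (f : MvPolynomial (Fin 2) ℂ) : act 1 f = f := by
  have h : sub 1 = X := by
    funext i
    simp [sub, Matrix.one_apply, Finset.sum_ite_eq, ite_mul]
  rw [act, h]
  simp [aeval_X_left]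

lemma sub_comp (A B : Matrix (Fin 2) (Fin 2) ℂ) (i : Fin 2) :
    aeval (sub A) (sub B i) = sub (B * A) i := by
  simp only [sub, map_sum, map_mul, aeval_X, aeval_C, Finset.mul_sum, Finset.sum_mul,
    Matrix.mul_apply]
  rw [Finset.sum_comm]
  congr 1; funext j; congr 1; funext k
  rw [algebraMap_eq]
  ring_nf

lemma act_act (A B : Matrix (Fin 2) (Fin 2) ℂ) (f : MvPolynomial (Fin 2) ℂ) :
    act A (act B f) = act (B * A) f := by
  rw [act, act, act, comp_aeval_apply]
  have h : (fun i => aeval (sub A) (sub B i)) = sub (B * A) := funext (sub_comp A B)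
  rw [h]

lemma act_hom {f : MvPolynomial (Fin 2) ℂ} {n : ℕ} (hf : f.IsHomogeneous n)
    (A : Matrix (Fin 2) (Fin 2) ℂ) : (act A f).IsHomogeneous n := by
  have := hf.aeval (sub A) (n := 1) (fun i => by
    apply IsHomogeneous.sum
    intro j _
    simpa using (isHomogeneous_X ℂ j).C_mul (A i j))
  simpa [act] using this


variable (n : ℕ)

/-- exponent vector (k, n-k) -/
def d (n k : ℕ) : Fin 2 →₀ ℕ := Finsupp.single 0 k + Finsupp.single 1 (n - k)

def m (n k : ℕ) : MvPolynomial (Fin 2) ℂ := monomial (d n k) 1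

lemma d_apply0 (k : ℕ) : d n k 0 = k := by simp [d]
lemma d_apply1 (k : ℕ) : d n k 1 = n - k := by simp [d]

lemma d_inj {k k' : ℕ} (h : d n k = d n k') : k = k' := by
  have : d n k 0 = d n k' 0 := by rw [h]
  simpa [d] using this

lemma m_eq (k : ℕ) : m n k = X 0 ^ k * X 1 ^ (n - k) := by
  rw [m, d, X_pow_eq_monomial, X_pow_eq_monomial, monomial_mul, one_mul]

lemma degree_eq (e : Fin 2 →₀ ℕ) : e.degree = e 0 + e 1 := by
  rw [Finsupp.degree, ← Fin.sum_univ_two e]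
  apply Finset.sum_subset (Finset.subset_univ _)
  intro i _ hi
  exact Finsupp.notMem_support_iff.1 hi

lemma d_degree {k : ℕ} (hk : k ≤ n) : (d n k).degree = n := by
  rw [degree_eq, d_apply0, d_apply1]; omega

lemma eq_d {e : Fin 2 →₀ ℕ} (he : e 0 + e 1 = n) : e = d n (e 0) := by
  ext i
  match i with
  | 0 => simp [d]
  | 1 => rw [d_apply1]; omega

/-- expansion of a homogeneous polynomial -/
lemma expand {f : MvPolynomial (Fin 2) ℂ} (hf : f.IsHomogeneous n) :
    f = ∑ k ∈ Finset.range (n + 1), coeff (d n k) f • m n k := by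
  apply MvPolynomial.ext
  intro e
  rw [coeff_sum]
  by_cases he : e 0 + e 1 = n
  · have he' : e = d n (e 0) := eq_d n he
    have h0 : e 0 ≤ n := by omega
    rw [Finset.sum_eq_single (e 0)]
    · rw [coeff_smul, m, coeff_monomial, if_pos he'.symm]
      simp [← he']
    · intro k _ hk
      rw [coeff_smul, m, coeff_monomial, if_neg, smul_zero]
      intro hc
      exact hk (d_inj n (hc.trans he'))
    · intro h; exact absurd (Finset.mem_range.2 (by omega)) h
  · have h1 : coeff e f = 0 := hf.coeff_eq_zero (by rw [degree_eq]; exact he)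
    rw [h1]
    symm
    apply Finset.sum_eq_zero
    intro k hk
    rw [coeff_smul, m, coeff_monomial, if_neg, smul_zero]
    intro hc
    apply he
    rw [← hc, d_apply0, d_apply1]
    have := Finset.mem_range.1 hk
    omega


lemma m_hom {k : ℕ} (hk : k ≤ n) : (m n k).IsHomogeneous n :=
  isHomogeneous_monomial _ (d_degree n hk)

lemma act_diag (u v : ℂ) (k : ℕ) :
    act !![u, 0; 0, v] (m n k) = (u ^ k * v ^ (n - k)) • m n k := by
  have h0 : sub !![u, 0; 0, v] 0 = C u * X 0 := by
    simp [sub, Fin.sum_univ_two]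
  have h1 : sub !![u, 0; 0, v] 1 = C v * X 1 := by
    simp [sub, Fin.sum_univ_two]
  rw [act, m_eq, map_mul, map_pow, map_pow, aeval_X, aeval_X, h0, h1,
    mul_pow, mul_pow, ← C_pow, ← C_pow, smul_eq_C_mul, C_mul]
  ring

lemma coeff_add_pow (a b : ℂ) (j : ℕ) :
    coeff (d n j) ((C a * X 0 + C b * X 1) ^ n)
      = a ^ j * b ^ (n - j) * (n.choose j : ℂ) := by
  rw [add_pow, coeff_sum]
  have key : ∀ k, (C a * X 0) ^ k * (C b * X 1) ^ (n - k) * ((n.choose k : ℕ) : MvPolynomial (Fin 2) ℂ)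
      = (a ^ k * b ^ (n - k) * (n.choose k : ℂ)) • m n k := by
    intro k
    rw [mul_pow, mul_pow, ← C_pow, ← C_pow, smul_eq_C_mul, m_eq,
      ← C_eq_coe_nat, C_mul, C_mul]
    ring
  by_cases hj : j ≤ n
  · rw [Finset.sum_eq_single j]
    · rw [key, coeff_smul, m, coeff_monomial, if_pos rfl, smul_eq_mul, mul_one]
    · intro k _ hk
      rw [key, coeff_smul, m, coeff_monomial, if_neg (fun hc => hk (d_inj n hc)), smul_zero]
    · intro h; exact absurd (Finset.mem_range.2 (by omega)) h
  · rw [Nat.choose_eq_zero_of_lt (by omega)]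
    push_cast
    rw [mul_zero]
    apply Finset.sum_eq_zero
    intro k hk
    rw [key, coeff_smul, m, coeff_monomial, if_neg, smul_zero]
    intro hc
    have hkj := d_inj n hc
    have := Finset.mem_range.1 hk
    omega


open Complex in
def uM (θ : ℝ) : Matrix (Fin 2) (Fin 2) ℂ :=
  !![Complex.exp (θ * Complex.I), 0; 0, Complex.exp (-(θ * Complex.I))]

lemma star_uM (θ : ℝ) : star (uM θ) = uM (-θ) := by
  ext i j
  fin_cases i <;> fin_cases j <;>
    simp [uM, Matrix.star_apply, ← Complex.exp_conj, map_mul, Complex.conj_I,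
      Complex.conj_ofReal, Complex.ofReal_neg]

lemma uM_mul (θ φ : ℝ) : uM θ * uM φ = uM (θ + φ) := by
  ext i j
  fin_cases i <;> fin_cases j <;>
    simp [uM, Matrix.mul_apply, Fin.sum_univ_two, ← Complex.exp_add] <;>
    (congr 1; ring)

lemma uM_zero : uM 0 = 1 := by
  simp [uM, Matrix.one_fin_two]

lemma uM_mem (θ : ℝ) : uM θ ∈ Matrix.specialUnitaryGroup (Fin 2) ℂ := by
  rw [Matrix.mem_specialUnitaryGroup_iff]
  constructor
  · rw [Matrix.mem_unitaryGroup_iff, star_uM, uM_mul, add_neg_cancel, uM_zero]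
  · rw [uM, Matrix.det_fin_two_of, ← Complex.exp_add]
    simp

def uG (θ : ℝ) : Matrix.specialUnitaryGroup (Fin 2) ℂ := ⟨uM θ, uM_mem θ⟩

lemma uG_inv (θ : ℝ) : ((uG θ : Matrix (Fin 2) (Fin 2) ℂ))⁻¹ = uM (-θ) := by
  apply Matrix.inv_eq_right_inv
  show uM θ * uM (-θ) = 1
  rw [uM_mul, add_neg_cancel, uM_zero]

def c : ℂ := ((Real.sqrt 2)⁻¹ : ℝ)

lemma c_sq : c * c = 1 / 2 := by
  rw [c, ← Complex.ofReal_mul, ← mul_inv, Real.mul_self_sqrt (by norm_num : (0:ℝ) ≤ 2)]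
  norm_num

lemma c_ne : c ≠ 0 := by
  have := c_sq
  intro h; rw [h] at this; norm_num at this

def rM : Matrix (Fin 2) (Fin 2) ℂ := !![c, -c; c, c]

lemma star_rM : star rM = !![c, c; -c, c] := by
  ext i j
  fin_cases i <;> fin_cases j <;>
    simp [rM, Matrix.star_apply, c, Complex.conj_ofReal]

lemma rM_mem : rM ∈ Matrix.specialUnitaryGroup (Fin 2) ℂ := by
  rw [Matrix.mem_specialUnitaryGroup_iff]
  constructor
  · rw [Matrix.mem_unitaryGroup_iff, star_rM]
    ext i j
    fin_cases i <;> fin_cases j <;>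
      simp [rM, Matrix.mul_apply, Fin.sum_univ_two, Matrix.one_apply] <;>
      linear_combination 2 * c_sq
  · rw [rM, Matrix.det_fin_two_of]
    linear_combination 2 * c_sq

def rG : Matrix.specialUnitaryGroup (Fin 2) ℂ := ⟨rM, rM_mem⟩

lemma rG_inv : ((rG : Matrix (Fin 2) (Fin 2) ℂ))⁻¹ = !![c, c; -c, c] := by
  apply Matrix.inv_eq_right_inv
  show rM * _ = 1
  ext i j
  fin_cases i <;> fin_cases j <;>
    simp [rM, Matrix.mul_apply, Fin.sum_univ_two, Matrix.one_apply] <;>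
    linear_combination 2 * c_sq


def lam (n : ℕ) (θ : ℝ) (k : ℕ) : ℂ :=
  Complex.exp ((((n : ℝ) - 2 * k) * θ) * Complex.I)

lemma act_uM_m (θ : ℝ) {k : ℕ} (hk : k ≤ n) :
    act (uM (-θ)) (m n k) = lam n θ k • m n k := by
  have : uM (-θ) = !![Complex.exp ((-θ : ℝ) * Complex.I), 0; 0,
      Complex.exp (-(((-θ : ℝ)) * Complex.I))] := rfl
  rw [this, act_diag, lam]
  congr 2
  rw [← Complex.exp_nat_mul, ← Complex.exp_nat_mul, ← Complex.exp_add]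
  congr 1
  rw [Nat.cast_sub hk]
  push_cast
  ring

lemma lam_pow (θ : ℝ) (k mm : ℕ) : lam n (mm * θ) k = lam n θ k ^ mm := by
  rw [lam, lam, ← Complex.exp_nat_mul]
  congr 1
  push_cast
  ring

lemma lam_inj {k k' : ℕ} (hk : k ≤ n) (hk' : k' ≤ n)
    (h : lam n (Real.pi / (2 * n + 1)) k = lam n (Real.pi / (2 * n + 1)) k') : k = k' := by
  rw [lam, lam, Complex.exp_eq_exp_iff_exists_int] at h
  obtain ⟨j, hj⟩ := h
  set θ : ℝ := Real.pi / (2 * n + 1) with hθ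
  have him : ((n : ℝ) - 2 * k) * θ = ((n : ℝ) - 2 * k') * θ + j * (2 * Real.pi) := by
    have := congrArg Complex.im hj
    simpa [Complex.mul_im, Complex.add_im, Complex.I_im, Complex.I_re,
      Complex.ofReal_im, Complex.ofReal_re, Complex.intCast_im, Complex.intCast_re] using this
  have hpi : Real.pi ≠ 0 := Real.pi_ne_zero
  have h2n : (2 * (n : ℝ) + 1) ≠ 0 := by positivity
  rw [hθ] at him
  field_simp at him
  have key : ((n : ℝ) - 2 * k) = ((n : ℝ) - 2 * k' + 2 * j * (2 * n + 1)) := by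
    have h' : ((n:ℝ) - 2*k) * Real.pi = ((n:ℝ) - 2*k' + 2*j*(2*n+1)) * Real.pi := by
      linear_combination Real.pi * him
    exact mul_right_cancel₀ hpi h'
  have key2 : (2 * (k' : ℤ) - 2 * k) = 2 * j * (2 * n + 1) := by
    have : (2 * (k' : ℝ) - 2 * k) = 2 * j * (2 * n + 1) := by linarith [key]
    exact_mod_cast this
  have hkZ : (k : ℤ) ≤ n := by exact_mod_cast hk
  have hkZ' : (k' : ℤ) ≤ n := by exact_mod_cast hk'
  have hk0 : (0:ℤ) ≤ k := Int.ofNat_nonneg k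
  have hk0' : (0:ℤ) ≤ k' := Int.ofNat_nonneg k'
  have hn0 : (0:ℤ) ≤ n := Int.ofNat_nonneg n
  have hj0 : j = 0 := by
    rcases lt_trichotomy j 0 with h | h | h
    · have hj1 : j ≤ -1 := by omega
      nlinarith [key2]
    · exact h
    · have hj1 : 1 ≤ j := by omega
      nlinarith [key2]
  rw [hj0] at key2
  omega


lemma act_uM_expand (θ : ℝ) {f : MvPolynomial (Fin 2) ℂ} (hfh : f.IsHomogeneous n) :
    act (uM (-θ)) f
      = ∑ k ∈ Finset.range (n + 1), (lam n θ k * coeff (d n k) f) • m n k := by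
  conv_lhs => rw [expand n hfh]
  rw [act, map_sum]
  apply Finset.sum_congr rfl
  intro k hk
  have hk' : k ≤ n := by have := Finset.mem_range.1 hk; omega
  rw [map_smul, ← act, act_uM_m n θ hk', smul_smul, mul_comm]

lemma extract (W : Submodule ℂ (MvPolynomial (Fin 2) ℂ))
    (hinv : ∀ θ : ℝ, ∀ f ∈ W, act (uM (-θ)) f ∈ W)
    {f : MvPolynomial (Fin 2) ℂ} (hf : f ∈ W) (hfh : f.IsHomogeneous n)
    {k0 : ℕ} (hk0 : k0 ∈ Finset.range (n + 1)) :
    coeff (d n k0) f • m n k0 ∈ W := by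
  set θ0 : ℝ := Real.pi / (2 * n + 1) with hθ0
  set v : ℕ → ℂ := lam n θ0 with hv
  have hvinj : Set.InjOn v (Finset.range (n + 1)) := by
    intro a ha b hb hab
    exact lam_inj n (by have := Finset.mem_range.1 (by exact_mod_cast ha); omega)
      (by have := Finset.mem_range.1 (by exact_mod_cast hb); omega) hab
  set q : Polynomial ℂ := Lagrange.basis (Finset.range (n + 1)) v k0 with hq
  have hqdeg : q.natDegree = n := by
    rw [hq, Lagrange.natDegree_basis hvinj hk0, Finset.card_range]
    omega
  have key : ∀ x : ℂ, Polynomial.eval x q = ∑ i ∈ Finset.range (n + 1), q.coeff i * x ^ i := by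
    intro x
    rw [Polynomial.eval_eq_sum_range' (by omega : q.natDegree < n + 1)]
  have h1 : (∑ mm ∈ Finset.range (n + 1), q.coeff mm • act (uM (-(mm * θ0))) f) ∈ W :=
    Submodule.sum_mem _ fun mm _ => Submodule.smul_mem _ _ (hinv _ _ hf)
  have h2 : (∑ mm ∈ Finset.range (n + 1), q.coeff mm • act (uM (-(mm * θ0))) f)
      = coeff (d n k0) f • m n k0 := by
    have step1 : ∀ mm, q.coeff mm • act (uM (-(mm * θ0))) f
        = ∑ k ∈ Finset.range (n + 1), (q.coeff mm * v k ^ mm * coeff (d n k) f) • m n k := by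
      intro mm
      rw [act_uM_expand n (mm * θ0) hfh, Finset.smul_sum]
      apply Finset.sum_congr rfl
      intro k _
      rw [smul_smul, lam_pow, ← mul_assoc, hv]
    simp_rw [step1]
    rw [Finset.sum_comm]
    rw [Finset.sum_eq_single k0]
    · rw [← Finset.sum_smul]
      congr 1
      have : ∑ mm ∈ Finset.range (n + 1), q.coeff mm * v k0 ^ mm * coeff (d n k0) f
          = (∑ mm ∈ Finset.range (n + 1), q.coeff mm * v k0 ^ mm) * coeff (d n k0) f := by
        rw [Finset.sum_mul]
      rw [this, ← key, hq, Lagrange.eval_basis_self hvinj hk0, one_mul]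
    · intro k hk hkk0
      rw [← Finset.sum_smul, ← Finset.sum_mul, ← key, hq,
        Lagrange.eval_basis_of_ne (Ne.symm hkk0) hk, zero_mul, zero_smul]
    · intro h; exact absurd hk0 h
  rw [← h2]
  exact h1


lemma eval_m {k : ℕ} (hk : k ≤ n) :
    eval ![(1:ℂ), 0] (m n k) = if k = n then 1 else 0 := by
  rw [m_eq, map_mul, map_pow, map_pow, eval_X, eval_X]
  by_cases h : k = n
  · subst h; simp
  · rw [if_neg h]
    have : (![(1:ℂ), 0] 1) = 0 := rfl
    rw [this, zero_pow (by omega), mul_zero]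

lemma coeff_d_n {p : MvPolynomial (Fin 2) ℂ} (hp : p.IsHomogeneous n) :
    coeff (d n n) p = eval ![(1:ℂ), 0] p := by
  conv_rhs => rw [expand n hp]
  rw [map_sum, Finset.sum_eq_single n]
  · rw [smul_eval, eval_m n le_rfl, if_pos rfl, mul_one]
  · intro k hk hkn
    rw [smul_eval, eval_m n (by have := Finset.mem_range.1 hk; omega), if_neg hkn, mul_zero]
  · intro h; exact absurd (Finset.self_mem_range_succ n) h

def rI : Matrix (Fin 2) (Fin 2) ℂ := !![c, c; -c, c]

lemma sub_rI_0 : sub rI 0 = C c * X 0 + C c * X 1 := by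
  simp [sub, rI, Fin.sum_univ_two]

lemma sub_rI_1 : sub rI 1 = C (-c) * X 0 + C c * X 1 := by
  simp [sub, rI, Fin.sum_univ_two, map_neg]

lemma act_rI_m {k : ℕ} :
    act rI (m n k) = (C c * X 0 + C c * X 1) ^ k * (C (-c) * X 0 + C c * X 1) ^ (n - k) := by
  rw [act, m_eq, map_mul, map_pow, map_pow, aeval_X, aeval_X, sub_rI_0, sub_rI_1]

end Stmt9
end

open Stmt9 in
/-- The action of SU(2) on the space Hⁿ of homogeneous complex polynomials of degree n in
two variables, (ρ(g) f)(z) = f(g⁻¹ z), is a representation of SU(2), and this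
representation is irreducible. -/
theorem stmt9 (n : ℕ)
    (ρ : Matrix.specialUnitaryGroup (Fin 2) ℂ →
      MvPolynomial (Fin 2) ℂ →ₗ[ℂ] MvPolynomial (Fin 2) ℂ)
    (hρ : ∀ (g : Matrix.specialUnitaryGroup (Fin 2) ℂ) (f : MvPolynomial (Fin 2) ℂ),
      ρ g f = aeval
        (fun i => ∑ j, C (((g : Matrix (Fin 2) (Fin 2) ℂ))⁻¹ i j) * X j) f) :
    (∀ f : MvPolynomial (Fin 2) ℂ, ρ 1 f = f) ∧
    (∀ (g h : Matrix.specialUnitaryGroup (Fin 2) ℂ) (f : MvPolynomial (Fin 2) ℂ),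
      ρ (g * h) f = ρ g (ρ h f)) ∧
    (∀ (g : Matrix.specialUnitaryGroup (Fin 2) ℂ),
      ∀ f ∈ homogeneousSubmodule (Fin 2) ℂ n, ρ g f ∈ homogeneousSubmodule (Fin 2) ℂ n) ∧
    (homogeneousSubmodule (Fin 2) ℂ n ≠ ⊥) ∧
    (∀ W : Submodule ℂ (MvPolynomial (Fin 2) ℂ), W ≤ homogeneousSubmodule (Fin 2) ℂ n →
      (∀ (g : Matrix.specialUnitaryGroup (Fin 2) ℂ), ∀ f ∈ W, ρ g f ∈ W) →
      W = ⊥ ∨ W = homogeneousSubmodule (Fin 2) ℂ n) := by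
  have hact : ∀ (g : Matrix.specialUnitaryGroup (Fin 2) ℂ) (f : MvPolynomial (Fin 2) ℂ),
      ρ g f = act ((g : Matrix (Fin 2) (Fin 2) ℂ))⁻¹ f := hρ
  refine ⟨?_, ?_, ?_, ?_, ?_⟩
  · intro f
    rw [hact]
    have h1 : ((1 : Matrix.specialUnitaryGroup (Fin 2) ℂ) : Matrix (Fin 2) (Fin 2) ℂ) = 1 := rfl
    rw [h1, inv_one, act_one]
  · intro g h f
    rw [hact, hact, hact, act_act]
    have hm : ((g * h : Matrix.specialUnitaryGroup (Fin 2) ℂ) : Matrix (Fin 2) (Fin 2) ℂ)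
        = (g : Matrix (Fin 2) (Fin 2) ℂ) * (h : Matrix (Fin 2) (Fin 2) ℂ) := rfl
    rw [hm, Matrix.mul_inv_rev]
  · intro g f hf
    rw [mem_homogeneousSubmodule] at hf ⊢
    rw [hact]
    exact act_hom hf _
  · intro hbot
    have h1 : (X 0 ^ n : MvPolynomial (Fin 2) ℂ) ∈ homogeneousSubmodule (Fin 2) ℂ n := by
      rw [mem_homogeneousSubmodule]
      simpa using (isHomogeneous_X ℂ (0 : Fin 2)).pow n
    rw [hbot, Submodule.mem_bot] at h1
    rw [X_pow_eq_monomial, monomial_eq_zero] at h1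
    exact one_ne_zero h1
  · intro W hWle hWinv
    by_cases hbot : W = ⊥
    · exact Or.inl hbot
    right
    have hinv : ∀ θ : ℝ, ∀ f ∈ W, act (uM (-θ)) f ∈ W := by
      intro θ f hf
      have h := hWinv (uG θ) f hf
      rwa [hact, uG_inv] at h
    have hrinv : ∀ f ∈ W, act rI f ∈ W := by
      intro f hf
      have h := hWinv rG f hf
      rwa [hact, rG_inv] at h
    obtain ⟨f, hfW, hf0⟩ := Submodule.exists_mem_ne_zero_of_ne_bot hbot
    have hfh : f.IsHomogeneous n := hWle hfW
    have hex : ∃ k0 ∈ Finset.range (n + 1), coeff (d n k0) f ≠ 0 := by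
      by_contra hc
      push_neg at hc
      apply hf0
      rw [expand n hfh]
      exact Finset.sum_eq_zero fun k hk => by rw [hc k hk, zero_smul]
    obtain ⟨k0, hk0, hc0⟩ := hex
    have hk0n : k0 ≤ n := by have := Finset.mem_range.1 hk0; omega
    have hmem_of_smul : ∀ (a : ℂ) (p : MvPolynomial (Fin 2) ℂ), a ≠ 0 → a • p ∈ W → p ∈ W := by
      intro a p ha hap
      have := W.smul_mem a⁻¹ hap
      rwa [smul_smul, inv_mul_cancel₀ ha, one_smul] at this
    have hm0 : m n k0 ∈ W :=
      hmem_of_smul _ _ hc0 (extract n W hinv hfW hfh hk0)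
    set g1 := act rI (m n k0) with hg1def
    have hg1W : g1 ∈ W := hrinv _ hm0
    have hg1h : g1.IsHomogeneous n := act_hom (m_hom n hk0n) _
    have hg1top : coeff (d n n) g1 ≠ 0 := by
      rw [coeff_d_n n hg1h, hg1def, act_rI_m, map_mul, map_pow, map_pow]
      have e0 : eval ![(1:ℂ), 0] (C c * X 0 + C c * X 1) = c := by
        simp [eval_X, eval_C]
      have e1 : eval ![(1:ℂ), 0] (C (-c) * X 0 + C c * X 1) = -c := by
        simp [eval_X, eval_C]
      rw [e0, e1]
      exact mul_ne_zero (pow_ne_zero _ c_ne) (pow_ne_zero _ (neg_ne_zero.2 c_ne))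
    have hmn : m n n ∈ W :=
      hmem_of_smul _ _ hg1top (extract n W hinv hg1W hg1h (Finset.self_mem_range_succ n))
    set g2 := act rI (m n n) with hg2def
    have hg2W : g2 ∈ W := hrinv _ hmn
    have hg2h : g2.IsHomogeneous n := act_hom (m_hom n le_rfl) _
    have hg2eq : g2 = (C c * X 0 + C c * X 1) ^ n := by
      rw [hg2def, act_rI_m, Nat.sub_self, pow_zero, mul_one]
    have hall : ∀ k ∈ Finset.range (n + 1), m n k ∈ W := by
      intro k hk
      have hkn : k ≤ n := by have := Finset.mem_range.1 hk; omega
      have hcoef : coeff (d n k) g2 ≠ 0 := by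
        rw [hg2eq, coeff_add_pow]
        refine mul_ne_zero (mul_ne_zero (pow_ne_zero _ c_ne) (pow_ne_zero _ c_ne)) ?_
        exact_mod_cast Nat.cast_ne_zero.2 (Nat.choose_pos hkn).ne'
      exact hmem_of_smul _ _ hcoef (extract n W hinv hg2W hg2h hk)
    apply le_antisymm hWle
    intro p hp
    rw [mem_homogeneousSubmodule] at hp
    rw [expand n hp]
    exact Submodule.sum_mem _ fun k hk => W.smul_mem _ (hall k hk)
end
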